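/- In the matching OCRS: let G = (V, E) be a graph, b ∈ [0,1], and x ∈ [0,1]^E with Σ_{g ∈ δ(u)} x_g ≤ b for every vertex u. Let each edge g independently be in A with probability x_g and in K with probability (1 - e^{-x_g})/x_g (interpreting this ratio as 1 when x_g = 0). Then for every edge g' = uv: Pr[g' ∈ K and A ∩ K ∩ ((δ(u) ∪ δ(v)) \ {g'}) = ∅] ≥ e^{-2b}. -/

import Mathlib

/-- Probability that an independent-membership random subset equals exactly `A`. -/
noncomputable def setProb {α : Type*} [Fintype α] [DecidableEq α]
    (x : α → ℝ) (A : Finset α) : ℝ :=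
  (∏ e ∈ A, x e) * ∏ e ∈ Aᶜ, (1 - x e)

open Classical in
/-- The set `δ(u)` of edges incident to the vertex `u`, for a graph whose edges are
given by their two endpoint maps `fst`, `snd`. -/
noncomputable def delta {V E : Type*} [Fintype E]
    (fst snd : E → V) (u : V) : Finset E :=
  Finset.univ.filter (fun g => fst g = u ∨ snd g = u)

lemma sum_setProb_mul_prod_ite {E : Type*} [Fintype E] [DecidableEq E]
    (x t f : E → ℝ) :
    ∑ A : Finset E, setProb x A *
        ∏ e : E, (if e ∈ A then t e else f e)
      = ∏ e : E, (x e * t e + (1 - x e) * f e) := by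
  unfold setProb
  rw [Finset.prod_add, Finset.powerset_univ]
  apply Finset.sum_congr rfl
  intro A _
  rw [← Finset.prod_mul_prod_compl A (fun e => if e ∈ A then t e else f e)]
  rw [Finset.prod_congr rfl (fun e he => if_pos he),
      Finset.prod_congr rfl (fun e (he : e ∈ Aᶜ) => if_neg (Finset.mem_compl.mp he)),
      ← Finset.compl_eq_univ_sdiff, Finset.prod_mul_distrib, Finset.prod_mul_distrib]
  ring


open Classical in
/-- in the randomized matching OCRS, with each edge independently in
`A` with probability `x_g` and in `K` with probability `(1 - e^{-x_g})/x_g`, for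
every edge `g' = uv`:
`Pr[g' ∈ K and A ∩ K ∩ ((δ(u) ∪ δ(v)) \ {g'}) = ∅] ≥ e^{-2b}`. -/
theorem stmt13 {V E : Type*} [Fintype E] [DecidableEq E]
    (fst snd : E → V) (b : ℝ) (hb : b ∈ Set.Icc (0 : ℝ) 1)
    (x : E → ℝ) (hx : ∀ g, x g ∈ Set.Icc (0 : ℝ) 1)
    (hdeg : ∀ u : V, ∑ g ∈ delta fst snd u, x g ≤ b)
    (k : E → ℝ)
    (hk : ∀ g, k g = if x g = 0 then 1 else (1 - Real.exp (-(x g))) / x g)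
    (g' : E) :
    Real.exp (-2 * b) ≤
      ∑ A : Finset E, ∑ K : Finset E,
        (setProb x A * setProb k K) *
          (if g' ∈ K ∧
              A ∩ K ∩ ((delta fst snd (fst g') ∪ delta fst snd (snd g')) \ {g'}) = ∅
            then (1 : ℝ) else 0) := by
  classical
  set S : Finset E := (delta fst snd (fst g') ∪ delta fst snd (snd g')) \ {g'} with hSdef
  have hSne : ∀ e ∈ S, e ≠ g' := by
    intro e he
    have := (Finset.mem_sdiff.mp he).2
    simpa using this
  -- Step 1: indicator factorizes
  have step1 : ∀ A K : Finset E, (if g' ∈ K ∧ A ∩ K ∩ S = ∅ then (1:ℝ) else 0)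
      = ∏ e : E, (if e ∈ K then (if e = g' then (1:ℝ) else if e ∈ S ∧ e ∈ A then 0 else 1)
                  else (if e = g' then 0 else 1)) := by
    intro A K
    by_cases h : g' ∈ K ∧ A ∩ K ∩ S = ∅
    · rw [if_pos h]
      symm
      apply Finset.prod_eq_one
      intro e _
      by_cases hK : e ∈ K
      · rw [if_pos hK]
        by_cases hg : e = g'
        · rw [if_pos hg]
        · rw [if_neg hg]
          by_cases hsa : e ∈ S ∧ e ∈ A
          · exfalso
            have hmem : e ∈ A ∩ K ∩ S := by
              rw [Finset.mem_inter, Finset.mem_inter]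
              exact ⟨⟨hsa.2, hK⟩, hsa.1⟩
            rw [h.2] at hmem
            exact absurd hmem (Finset.notMem_empty e)
          · rw [if_neg hsa]
      · rw [if_neg hK]
        have hg : e ≠ g' := fun he => hK (he ▸ h.1)
        rw [if_neg hg]
    · rw [if_neg h]
      push_neg at h
      by_cases hK : g' ∈ K
      · obtain ⟨e, he⟩ := h hK
        have heS : e ∈ S := (Finset.mem_inter.mp he).2
        have heAK := Finset.mem_inter.mp (Finset.mem_inter.mp he).1
        symm
        apply Finset.prod_eq_zero (Finset.mem_univ e)
        rw [if_pos heAK.2, if_neg (hSne e heS), if_pos ⟨heS, heAK.1⟩]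
      · symm
        apply Finset.prod_eq_zero (Finset.mem_univ g')
        rw [if_neg hK, if_pos rfl]
  -- Step 2: compute the double sum
  have key : (∑ A : Finset E, ∑ K : Finset E,
        (setProb x A * setProb k K) *
          (if g' ∈ K ∧ A ∩ K ∩ S = ∅ then (1:ℝ) else 0))
      = k g' * ∏ e ∈ S, (1 - x e * k e) := by
    have e1 : (∑ A : Finset E, ∑ K : Finset E,
          (setProb x A * setProb k K) *
            (if g' ∈ K ∧ A ∩ K ∩ S = ∅ then (1:ℝ) else 0))
        = ∑ A : Finset E, setProb x A *
            ∏ e : E, (if e ∈ A then (if e = g' then k e else if e ∈ S then 1 - k e else 1)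
                      else (if e = g' then k e else 1)) := by
      apply Finset.sum_congr rfl
      intro A _
      have : (∑ K : Finset E, (setProb x A * setProb k K) *
            (if g' ∈ K ∧ A ∩ K ∩ S = ∅ then (1:ℝ) else 0))
          = setProb x A * ∑ K : Finset E, setProb k K *
              ∏ e : E, (if e ∈ K then (if e = g' then (1:ℝ) else if e ∈ S ∧ e ∈ A then 0 else 1)
                        else (if e = g' then 0 else 1)) := by
        rw [Finset.mul_sum]
        apply Finset.sum_congr rfl
        intro K _
        rw [step1 A K, mul_assoc]
      rw [this, sum_setProb_mul_prod_ite k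
        (fun e => if e = g' then (1:ℝ) else if e ∈ S ∧ e ∈ A then 0 else 1)
        (fun e => if e = g' then (0:ℝ) else 1)]
      congr 1
      apply Finset.prod_congr rfl
      intro e _
      split_ifs <;> first | ring1 | tauto
    rw [e1, sum_setProb_mul_prod_ite]
    have e2 : ∀ e : E, x e * (if e = g' then k e else if e ∈ S then 1 - k e else 1)
          + (1 - x e) * (if e = g' then k e else 1)
        = (if e = g' then k e else if e ∈ S then 1 - x e * k e else 1) := by
      intro e
      split_ifs <;> first | ring1 | tauto
    rw [Finset.prod_congr rfl (fun e _ => e2 e)]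
    rw [← Finset.mul_prod_erase Finset.univ _ (Finset.mem_univ g'), if_pos rfl]
    congr 1
    have hfil : (Finset.univ.erase g').filter (· ∈ S) = S := by
      ext e
      constructor
      · intro h; exact (Finset.mem_filter.mp h).2
      · intro h
        exact Finset.mem_filter.mpr ⟨Finset.mem_erase.mpr ⟨hSne e h, Finset.mem_univ e⟩, h⟩
    rw [← hfil, Finset.prod_filter]
    apply Finset.prod_congr rfl
    intro e he
    rw [if_neg (Finset.mem_erase.mp he).1, hfil]
  rw [key]
  -- per-edge identity: 1 - x e * k e = exp (-(x e))
  have hxk : ∀ e : E, 1 - x e * k e = Real.exp (-(x e)) := by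
    intro e
    rcases eq_or_ne (x e) 0 with h0 | h0
    · rw [hk e, if_pos h0, h0]; simp
    · rw [hk e, if_neg h0, mul_div_cancel₀ _ h0]; ring
  rw [Finset.prod_congr rfl (fun e _ => hxk e), ← Real.exp_sum]
  -- k g' ≥ exp (-(x g'))
  have hkg : Real.exp (-(x g')) ≤ k g' := by
    rcases eq_or_ne (x g') 0 with h0 | h0
    · rw [hk g', if_pos h0, h0]; simp
    · have hpos : 0 < x g' := lt_of_le_of_ne (hx g').1 (Ne.symm h0)
      rw [hk g', if_neg h0, le_div_iff₀ hpos]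
      have h1 : x g' + 1 ≤ Real.exp (x g') := Real.add_one_le_exp _
      have h2 : (x g' + 1) * Real.exp (-(x g')) ≤ Real.exp (x g') * Real.exp (-(x g')) :=
        mul_le_mul_of_nonneg_right h1 (Real.exp_pos _).le
      rw [← Real.exp_add] at h2
      simp only [add_neg_cancel, Real.exp_zero] at h2
      nlinarith
  -- sum bound
  have hsum : ∑ e ∈ S, x e ≤ 2 * b - x g' := by
    have hgu : g' ∈ delta fst snd (fst g') := by simp [delta]
    have hgv : g' ∈ delta fst snd (snd g') := by simp [delta]
    have hinter : x g' ≤ ∑ e ∈ delta fst snd (fst g') ∩ delta fst snd (snd g'), x e :=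
      Finset.single_le_sum (fun e _ => (hx e).1) (Finset.mem_inter.mpr ⟨hgu, hgv⟩)
    have hui : (∑ e ∈ delta fst snd (fst g') ∪ delta fst snd (snd g'), x e)
        + ∑ e ∈ delta fst snd (fst g') ∩ delta fst snd (snd g'), x e
        = (∑ e ∈ delta fst snd (fst g'), x e) + ∑ e ∈ delta fst snd (snd g'), x e :=
      Finset.sum_union_inter
    have hS2 : (∑ e ∈ S, x e) + x g'
        = ∑ e ∈ delta fst snd (fst g') ∪ delta fst snd (snd g'), x e := by
      rw [hSdef, ← Finset.erase_eq]
      exact Finset.sum_erase_add _ _ (Finset.mem_union.mpr (Or.inl hgu))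
    have h1 := hdeg (fst g')
    have h2 := hdeg (snd g')
    have hx0 := (hx g').1
    linarith
  -- finish
  have hfin : Real.exp (-2 * b) = Real.exp (-(x g')) * Real.exp (x g' - 2 * b) := by
    rw [← Real.exp_add]; ring_nf
  rw [hfin]
  apply mul_le_mul hkg _ (Real.exp_pos _).le (le_trans (Real.exp_pos _).le hkg)
  rw [Real.exp_le_exp]
  have : ∑ e ∈ S, -x e = -∑ e ∈ S, x e := by rw [Finset.sum_neg_distrib]
  rw [this]
  linarith
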